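/- arXiv:1607.02045 — 3 statements merged into one kernel-verified Lean document; each statement's English description precedes it below -/
import Mathlib

section
/- Let G be a finite simple graph on a vertex set V in which every vertex has degree at most D_max, let A and B be adjacent vertices of G, and let P ≥ 2·D_max. Suppose f is a partial assignment of slots to directed links, i.e., a function assigning to some ordered pairs of adjacent vertices a value in Fin P (formally f : V → V → Option (Fin P) with f u v = none whenever u and v are not adjacent), and suppose f leaves the link (A,B) unassigned. Let Rslot_A ⊆ Fin P be the set of slots assigned by f to links whose destination is A, and let Tslot_B ⊆ Fin P be the set of slots assigned by f to links whose source is B. Then the feasible slot set Fin P \ (Rslot_A ∪ Tslot_B) is nonempty. -/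
/-- Proposition 1 of the paper: in a graph of maximum degree `D_max`, with period
`P ≥ 2·D_max`, any partial assignment of slots to directed links that leaves the
link `(A,B)` unassigned still leaves a feasible slot for `(A,B)`, i.e.
`Fin P \ (Rslot_A ∪ Tslot_B)` is nonempty. -/
theorem feasible_slot_exists {V : Type*} [Fintype V] [DecidableEq V]
    (G : SimpleGraph V) [DecidableRel G.Adj] (D_max P : ℕ)
    (hdeg : ∀ v : V, G.degree v ≤ D_max) (hP : 2 * D_max ≤ P)
    (A B : V) (hAB : G.Adj A B)
    (f : V → V → Option (Fin P))
    (hadj : ∀ u v : V, ¬ G.Adj u v → f u v = none)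
    (hunassigned : f A B = none) :
    ((Finset.univ : Finset (Fin P)) \
      ((Finset.univ.filter fun s : Fin P => ∃ x : V, f x A = some s) ∪
       (Finset.univ.filter fun s : Fin P => ∃ y : V, f B y = some s))).Nonempty := by
  classical
  have hdegA : 0 < G.degree A := by
    rw [G.degree_pos_iff_exists_adj]; exact ⟨B, hAB⟩
  have hPpos : 0 < P := by
    have := hdeg A; omega
  set R := Finset.univ.filter (fun s : Fin P => ∃ x : V, f x A = some s) with hR
  set T := Finset.univ.filter (fun s : Fin P => ∃ y : V, f B y = some s) with hT
  set g : V → Fin P := fun x => (f x A).getD ⟨0, hPpos⟩ with hg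
  set h : V → Fin P := fun y => (f B y).getD ⟨0, hPpos⟩ with hh
  have hTsub : T ⊆ (G.neighborFinset B).image h := by
    intro s hs
    rw [hT, Finset.mem_filter] at hs
    obtain ⟨-, y, hy⟩ := hs
    refine Finset.mem_image.mpr ⟨y, ?_, ?_⟩
    · rw [SimpleGraph.mem_neighborFinset]
      by_contra hc
      rw [hadj B y hc] at hy; exact nomatch hy
    · rw [hh]; simp [hy]
  have hTcard : T.card ≤ D_max := by
    calc T.card ≤ ((G.neighborFinset B).image h).card := Finset.card_le_card hTsub
    _ ≤ (G.neighborFinset B).card := Finset.card_image_le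
    _ = G.degree B := G.card_neighborFinset_eq_degree B
    _ ≤ D_max := hdeg B
  have hkey : (R ∪ T).card < P := by
    rcases hBA : f B A with _ | t
    · -- f B A = none : R uses at most deg A - 1 slots
      have hRsub : R ⊆ ((G.neighborFinset A).erase B).image g := by
        intro s hs
        rw [hR, Finset.mem_filter] at hs
        obtain ⟨-, x, hx⟩ := hs
        refine Finset.mem_image.mpr ⟨x, ?_, ?_⟩
        · refine Finset.mem_erase.mpr ⟨?_, ?_⟩
          · rintro rfl; rw [hBA] at hx; exact nomatch hx
          · rw [SimpleGraph.mem_neighborFinset]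
            by_contra hc
            rw [hadj x A (fun hc' => hc hc'.symm)] at hx
            exact nomatch hx
        · rw [hg]; simp [hx]
      have hBmem : B ∈ G.neighborFinset A := by
        rw [SimpleGraph.mem_neighborFinset]; exact hAB
      have hRcard : R.card ≤ G.degree A - 1 := by
        calc R.card ≤ (((G.neighborFinset A).erase B).image g).card :=
              Finset.card_le_card hRsub
        _ ≤ ((G.neighborFinset A).erase B).card := Finset.card_image_le
        _ = G.degree A - 1 := by
              rw [Finset.card_erase_of_mem hBmem, G.card_neighborFinset_eq_degree]
      have := Finset.card_union_le R T
      have hA := hdeg A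
      omega
    · -- f B A = some t : t counted in both R and T
      have hRsub : R ⊆ (G.neighborFinset A).image g := by
        intro s hs
        rw [hR, Finset.mem_filter] at hs
        obtain ⟨-, x, hx⟩ := hs
        refine Finset.mem_image.mpr ⟨x, ?_, ?_⟩
        · rw [SimpleGraph.mem_neighborFinset]
          by_contra hc
          rw [hadj x A (fun hc' => hc hc'.symm)] at hx
          exact nomatch hx
        · rw [hg]; simp [hx]
      have hRcard : R.card ≤ D_max := by
        calc R.card ≤ ((G.neighborFinset A).image g).card := Finset.card_le_card hRsub
        _ ≤ (G.neighborFinset A).card := Finset.card_image_le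
        _ = G.degree A := G.card_neighborFinset_eq_degree A
        _ ≤ D_max := hdeg A
      have htmem : t ∈ R ∩ T := by
        rw [Finset.mem_inter, hR, hT, Finset.mem_filter, Finset.mem_filter]
        exact ⟨⟨Finset.mem_univ t, B, hBA⟩, Finset.mem_univ t, A, hBA⟩
      have hint : 1 ≤ (R ∩ T).card := Finset.card_pos.mpr ⟨t, htmem⟩
      have := Finset.card_union_add_card_inter R T
      omega
  rw [Finset.sdiff_nonempty]
  intro hsub
  have := Finset.card_le_card hsub
  rw [Finset.card_univ, Fintype.card_fin] at this
  omega
end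

section
/- Let G be a finite simple graph on a vertex set V in which every vertex has degree at most D_max, let A and B be adjacent vertices of G, and let f be a partial assignment of slots to directed links (a function f : V → V → Option (Fin P) with f u v = none whenever u and v are not adjacent) that leaves the link (A,B) unassigned. Let Rslot_A be the set of slots assigned by f to links whose destination is A and Tslot_B the set of slots assigned by f to links whose source is B. Then |Rslot_A ∪ Tslot_B| ≤ 2·D_max − 1. -/
/-- Intermediate cardinality bound in the proof of Proposition 1: if the link `(A,B)`
is unassigned, then `|Rslot_A ∪ Tslot_B| ≤ 2·D_max − 1`. -/
theorem slot_union_card_bound {V : Type*} [Fintype V] [DecidableEq V]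
    (G : SimpleGraph V) [DecidableRel G.Adj] (D_max P : ℕ)
    (hdeg : ∀ v : V, G.degree v ≤ D_max)
    (A B : V) (hAB : G.Adj A B)
    (f : V → V → Option (Fin P))
    (hadj : ∀ u v : V, ¬ G.Adj u v → f u v = none)
    (hunassigned : f A B = none) :
    ((Finset.univ.filter fun s : Fin P => ∃ x : V, f x A = some s) ∪
     (Finset.univ.filter fun s : Fin P => ∃ y : V, f B y = some s)).card
      ≤ 2 * D_max - 1 := by
  classical
  set S1 : Finset (Fin P) :=
    Finset.univ.filter fun s : Fin P => ∃ x : V, x ≠ B ∧ f x A = some s with hS1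
  set S2 : Finset (Fin P) :=
    Finset.univ.filter fun s : Fin P => ∃ y : V, f B y = some s with hS2
  have hsub : ((Finset.univ.filter fun s : Fin P => ∃ x : V, f x A = some s) ∪
      (Finset.univ.filter fun s : Fin P => ∃ y : V, f B y = some s)) ⊆ S1 ∪ S2 := by
    intro s hs
    simp only [hS1, hS2, Finset.mem_union, Finset.mem_filter, Finset.mem_univ,
      true_and] at hs ⊢
    rcases hs with ⟨x, hx⟩ | h
    · by_cases hxB : x = B
      · right; exact ⟨A, hxB ▸ hx⟩
      · left; exact ⟨x, hxB, hx⟩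
    · right; exact h
  -- bound on S1
  have hS1sub : S1 ⊆ ((G.neighborFinset A).erase B).biUnion fun x => (f x A).toFinset := by
    intro s hs
    simp only [hS1, Finset.mem_filter, Finset.mem_univ, true_and] at hs
    obtain ⟨x, hxB, hx⟩ := hs
    have hadjx : G.Adj x A := by
      by_contra h
      rw [hadj x A h] at hx
      exact Option.some_ne_none s hx.symm
    refine Finset.mem_biUnion.mpr ⟨x, ?_, ?_⟩
    · exact Finset.mem_erase.mpr ⟨hxB, (SimpleGraph.mem_neighborFinset G A x).mpr hadjx.symm⟩
    · simp [hx]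
  have hS2sub : S2 ⊆ (G.neighborFinset B).biUnion fun y => (f B y).toFinset := by
    intro s hs
    simp only [hS2, Finset.mem_filter, Finset.mem_univ, true_and] at hs
    obtain ⟨y, hy⟩ := hs
    have hadjy : G.Adj B y := by
      by_contra h
      rw [hadj B y h] at hy
      exact Option.some_ne_none s hy.symm
    refine Finset.mem_biUnion.mpr ⟨y, (SimpleGraph.mem_neighborFinset G B y).mpr hadjy, ?_⟩
    simp [hy]
  have hb1 : S1.card ≤ G.degree A - 1 := by
    calc S1.card ≤ (((G.neighborFinset A).erase B).biUnion fun x => (f x A).toFinset).card :=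
          Finset.card_le_card hS1sub
      _ ≤ ∑ x ∈ (G.neighborFinset A).erase B, (f x A).toFinset.card :=
          Finset.card_biUnion_le
      _ ≤ ∑ _x ∈ (G.neighborFinset A).erase B, 1 := by
          apply Finset.sum_le_sum
          intro x _
          cases f x A <;> simp
      _ = ((G.neighborFinset A).erase B).card := by simp
      _ = G.degree A - 1 := by
          rw [Finset.card_erase_of_mem ((SimpleGraph.mem_neighborFinset G A B).mpr hAB)]
          rfl
  have hb2 : S2.card ≤ G.degree B := by
    calc S2.card ≤ ((G.neighborFinset B).biUnion fun y => (f B y).toFinset).card :=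
          Finset.card_le_card hS2sub
      _ ≤ ∑ y ∈ G.neighborFinset B, (f B y).toFinset.card := Finset.card_biUnion_le
      _ ≤ ∑ _y ∈ G.neighborFinset B, 1 := by
          apply Finset.sum_le_sum
          intro y _
          cases f B y <;> simp
      _ = G.degree B := by rw [Finset.sum_const, smul_eq_mul, mul_one]; rfl
  have hdA : 1 ≤ G.degree A := by
    rw [← SimpleGraph.card_neighborFinset_eq_degree]
    exact Finset.card_pos.mpr ⟨B, (SimpleGraph.mem_neighborFinset G A B).mpr hAB⟩
  have h1 := hdeg A
  have h2 := hdeg B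
  calc _ ≤ (S1 ∪ S2).card := Finset.card_le_card hsub
    _ ≤ S1.card + S2.card := Finset.card_union_le _ _
    _ ≤ 2 * D_max - 1 := by omega
end

section
/- For every finite simple graph G in which every vertex has degree at most D_max, there exists a complete link schedule of length P = 2·D_max, i.e., a function f assigning to every ordered pair of adjacent vertices (u,v) a slot f(u,v) ∈ Fin (2·D_max), such that the schedule is interference-free: for every vertex v there is no slot s that is simultaneously the slot of some link with source v and the slot of some link with destination v. -/
/-- Greedy coloring: if every element conflicts with fewer than `n` others, there is
a conflict-free coloring with `n` colors. -/
lemma greedy_coloring {ι : Type*} [Fintype ι] [DecidableEq ι] (R : ι → ι → Prop)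
    [DecidableRel R] (hsymm : ∀ a b, R a b → R b a) (hirr : ∀ a, ¬ R a a)
    (n : ℕ) (hn : 0 < n) (hdeg : ∀ a, (Finset.univ.filter (R a)).card < n) :
    ∃ c : ι → Fin n, ∀ a b, R a b → c a ≠ c b := by
  suffices h : ∀ s : Finset ι, ∃ c : ι → Fin n,
      ∀ a ∈ s, ∀ b ∈ s, R a b → c a ≠ c b by
    obtain ⟨c, hc⟩ := h Finset.univ
    exact ⟨c, fun a b hab => hc a (Finset.mem_univ a) b (Finset.mem_univ b) hab⟩
  intro s
  induction s using Finset.induction with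
  | empty => exact ⟨fun _ => ⟨0, hn⟩, by simp⟩
  | @insert a s ha ih =>
    obtain ⟨c, hc⟩ := ih
    have hcard : ((s.filter (R a)).image c).card < n := by
      calc ((s.filter (R a)).image c).card ≤ (s.filter (R a)).card :=
            Finset.card_image_le
        _ ≤ (Finset.univ.filter (R a)).card :=
            Finset.card_le_card (Finset.filter_subset_filter _ (Finset.subset_univ s))
        _ < n := hdeg a
    obtain ⟨k, hk⟩ : ∃ k : Fin n, k ∉ (s.filter (R a)).image c := by
      by_contra hcon
      push_neg at hcon
      have hsub : (Finset.univ : Finset (Fin n)) ⊆ (s.filter (R a)).image c :=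
        fun k _ => hcon k
      have := Finset.card_le_card hsub
      simp [Finset.card_univ] at this
      omega
    refine ⟨Function.update c a k, ?_⟩
    intro x hx y hy hxy
    by_cases hxa : x = a
    · by_cases hya : y = a
      · rw [hxa, hya] at hxy
        exact absurd hxy (hirr a)
      · have hys : y ∈ s := by
          rcases Finset.mem_insert.1 hy with h | h
          · exact absurd h hya
          · exact h
        rw [hxa, Function.update_self, Function.update_of_ne hya]
        rw [hxa] at hxy
        intro h
        exact hk (Finset.mem_image.2 ⟨y, Finset.mem_filter.2 ⟨hys, hxy⟩, h.symm⟩)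
    · have hxs : x ∈ s := by
        rcases Finset.mem_insert.1 hx with h | h
        · exact absurd h hxa
        · exact h
      by_cases hya : y = a
      · rw [hya, Function.update_of_ne hxa, Function.update_self]
        rw [hya] at hxy
        intro h
        exact hk (Finset.mem_image.2 ⟨x, Finset.mem_filter.2 ⟨hxs, hsymm _ _ hxy⟩, h⟩)
      · have hys : y ∈ s := by
          rcases Finset.mem_insert.1 hy with h | h
          · exact absurd h hya
          · exact h
        rw [Function.update_of_ne hxa, Function.update_of_ne hya]
        exact hc x hxs y hys hxy

/-- Proposition 1 applied greedily: every finite simple graph with maximum degree at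
most `D_max` admits a complete interference-free link schedule of length `2·D_max`:
no vertex both transmits and receives in the same slot. -/
theorem complete_schedule_exists {V : Type*} [Fintype V]
    (G : SimpleGraph V) [DecidableRel G.Adj] (D_max : ℕ)
    (hdeg : ∀ v : V, G.degree v ≤ D_max) :
    ∃ f : ∀ u v : V, G.Adj u v → Fin (2 * D_max),
      ∀ (v : V) (s : Fin (2 * D_max)),
        ¬ ((∃ x : V, ∃ h : G.Adj v x, f v x h = s) ∧
           (∃ y : V, ∃ h : G.Adj y v, f y v h = s)) := by
  classical
  rcases Nat.eq_zero_or_pos D_max with hD | hD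
  · -- no edges possible
    refine ⟨fun u v h => ?_, ?_⟩
    · exfalso
      have h1 : 0 < G.degree u := (G.degree_pos_iff_exists_adj u).2 ⟨v, h⟩
      have h2 := hdeg u
      omega
    · rintro v s ⟨⟨x, h1, _⟩, _⟩
      have ha := (G.degree_pos_iff_exists_adj v).2 ⟨x, h1⟩
      have hb := hdeg v
      omega
  · let L := {p : V × V // G.Adj p.1 p.2}
    let R : L → L → Prop := fun a b => a ≠ b ∧ (a.1.1 = b.1.2 ∨ a.1.2 = b.1.1)
    have hsymm : ∀ a b, R a b → R b a := by
      rintro a b ⟨hne, h | h⟩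
      · exact ⟨hne.symm, Or.inr h.symm⟩
      · exact ⟨hne.symm, Or.inl h.symm⟩
    have hirr : ∀ a, ¬ R a a := fun a h => h.1 rfl
    have hdegL : ∀ a : L, (Finset.univ.filter (R a)).card < 2 * D_max := by
      intro a
      obtain ⟨⟨u, v⟩, hadj⟩ := a
      set S1 : Finset L := Finset.univ.filter (fun b : L => b.1.2 = u) with hS1
      set S2 : Finset L := Finset.univ.filter (fun b : L => b.1.1 = v) with hS2
      have hsub : Finset.univ.filter (R ⟨(u, v), hadj⟩) ⊆ S1 ∪ S2 := by
        intro b hb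
        rcases Finset.mem_filter.1 hb with ⟨-, -, h | h⟩
        · exact Finset.mem_union_left _ (Finset.mem_filter.2 ⟨Finset.mem_univ _, h.symm⟩)
        · exact Finset.mem_union_right _ (Finset.mem_filter.2 ⟨Finset.mem_univ _, h.symm⟩)
      have hcard1 : S1.card = G.degree u := by
        rw [← SimpleGraph.card_neighborFinset_eq_degree]
        apply Finset.card_bij (fun (b : L) _ => b.1.1)
        · intro b hb
          have hb2 := (Finset.mem_filter.1 hb).2
          rw [SimpleGraph.mem_neighborFinset]
          exact (hb2 ▸ b.2).symm
        · intro b1 hb1 b2 hb2 h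
          have e1 := (Finset.mem_filter.1 hb1).2
          have e2 := (Finset.mem_filter.1 hb2).2
          exact Subtype.ext (Prod.ext h (e1.trans e2.symm))
        · intro w hw
          rw [SimpleGraph.mem_neighborFinset] at hw
          exact ⟨⟨(w, u), hw.symm⟩, Finset.mem_filter.2 ⟨Finset.mem_univ _, rfl⟩, rfl⟩
      have hcard2 : S2.card = G.degree v := by
        rw [← SimpleGraph.card_neighborFinset_eq_degree]
        apply Finset.card_bij (fun (b : L) _ => b.1.2)
        · intro b hb
          have hb2 := (Finset.mem_filter.1 hb).2
          rw [SimpleGraph.mem_neighborFinset]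
          exact hb2 ▸ b.2
        · intro b1 hb1 b2 hb2 h
          have e1 := (Finset.mem_filter.1 hb1).2
          have e2 := (Finset.mem_filter.1 hb2).2
          exact Subtype.ext (Prod.ext (e1.trans e2.symm) h)
        · intro w hw
          rw [SimpleGraph.mem_neighborFinset] at hw
          exact ⟨⟨(v, w), hw⟩, Finset.mem_filter.2 ⟨Finset.mem_univ _, rfl⟩, rfl⟩
      have hrev : (⟨(v, u), hadj.symm⟩ : L) ∈ S1 ∩ S2 :=
        Finset.mem_inter.2 ⟨Finset.mem_filter.2 ⟨Finset.mem_univ _, rfl⟩,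
          Finset.mem_filter.2 ⟨Finset.mem_univ _, rfl⟩⟩
      have hint : 1 ≤ (S1 ∩ S2).card := Finset.card_pos.2 ⟨_, hrev⟩
      have hunion := Finset.card_union_add_card_inter S1 S2
      have hle := Finset.card_le_card hsub
      have h1 := hdeg u
      have h2 := hdeg v
      omega
    obtain ⟨c, hc⟩ := greedy_coloring R hsymm hirr (2 * D_max) (by omega) hdegL
    refine ⟨fun u v h => c ⟨(u, v), h⟩, ?_⟩
    rintro v s ⟨⟨x, h1, e1⟩, ⟨y, h2, e2⟩⟩
    have hR : R ⟨(v, x), h1⟩ ⟨(y, v), h2⟩ := by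
      refine ⟨?_, Or.inl rfl⟩
      intro h
      have hvx : x = v := congrArg (fun (b : L) => b.1.2) h
      exact G.loopless.irrefl v (hvx ▸ h1)
    exact hc _ _ hR (e1.trans e2.symm)
end
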